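/- Let 1 ≤ p_A, p_B, p_H ≤ ∞, let a, b ∈ ℝ^d satisfy αᵀa < β and αᵀb > β, and let ω_a, ω_b, ω_H > 0. If the pair (x*, y*) ∈ 𝓗 × 𝓗 minimizes the function (x, y) ↦ ω_a‖x − a‖_{p_A} + ω_H‖x − y‖_{p_H} + ω_b‖y − b‖_{p_B} over 𝓗 × 𝓗, then there exist λ_a, λ_b ∈ ℝ such that λ_a α ∈ ω_a ∂(‖· − a‖_{p_A})(x*) + ω_H ∂(‖· − y*‖_{p_H})(x*) and λ_b α ∈ ω_b ∂(‖· − b‖_{p_B})(y*) + ω_H ∂(‖x* − ·‖_{p_H})(y*), where the sums are Minkowski sums of subdifferential sets. -/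

import Mathlib

open scoped ENNReal BigOperators Pointwise

/-- The `ℓ_p` norm on `ℝ^d` for `p : ℝ≥0∞` (intended for `1 ≤ p ≤ ∞`). -/
noncomputable def lpNorm {d : ℕ} (p : ℝ≥0∞) (x : Fin d → ℝ) : ℝ :=
  if p = ∞ then ⨆ k, |x k| else (∑ k, |x k| ^ p.toReal) ^ (1 / p.toReal)

/-- The (convex-analysis) subdifferential of `f : ℝ^d → ℝ` at `x`. -/
def subdiff {d : ℕ} (f : (Fin d → ℝ) → ℝ) (x : Fin d → ℝ) : Set (Fin d → ℝ) :=
  {u | ∀ y, f x + ∑ i, u i * (y i - x i) ≤ f y}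

lemma lpNorm_eq_norm {d : ℕ} (p : ℝ≥0∞) (hp : 1 ≤ p) (x : Fin d → ℝ) :
    lpNorm p x = @norm (PiLp p fun _ : Fin d => ℝ) _ ((WithLp.equiv p _).symm x) := by
  haveI : Fact (1 ≤ p) := ⟨hp⟩
  rcases eq_or_ne p ∞ with h | h
  · subst h
    rw [lpNorm, if_pos rfl, PiLp.norm_eq_ciSup]
    simp [Real.norm_eq_abs]
  · rw [lpNorm, if_neg h, PiLp.norm_eq_sum (ENNReal.toReal_pos (zero_lt_one.trans_le hp).ne' h)]
    simp [Real.norm_eq_abs]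

lemma lpNorm_add_le {d : ℕ} (p : ℝ≥0∞) (hp : 1 ≤ p) (x y : Fin d → ℝ) :
    lpNorm p (x + y) ≤ lpNorm p x + lpNorm p y := by
  haveI : Fact (1 ≤ p) := ⟨hp⟩
  rw [lpNorm_eq_norm p hp, lpNorm_eq_norm p hp, lpNorm_eq_norm p hp, WithLp.equiv_symm_apply, WithLp.toLp_add]
  exact norm_add_le _ _

lemma lpNorm_smul {d : ℕ} (p : ℝ≥0∞) (hp : 1 ≤ p) (c : ℝ) (x : Fin d → ℝ) :
    lpNorm p (c • x) = |c| * lpNorm p x := by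
  haveI : Fact (1 ≤ p) := ⟨hp⟩
  rw [lpNorm_eq_norm p hp, lpNorm_eq_norm p hp, WithLp.equiv_symm_apply, WithLp.toLp_smul, norm_smul,
    Real.norm_eq_abs]

lemma lpNorm_le_sum {d : ℕ} (p : ℝ≥0∞) (hp : 1 ≤ p) (x : Fin d → ℝ) :
    lpNorm p x ≤ ∑ i, |x i| := by
  haveI : Fact (1 ≤ p) := ⟨hp⟩
  rw [lpNorm_eq_norm p hp]
  have hx : x = ∑ i, (x i) • (Pi.single i 1 : Fin d → ℝ) := by
    funext j
    simp [Pi.single_apply, Finset.sum_apply]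
  calc ‖(WithLp.equiv p _).symm x‖
      = ‖∑ i, (x i) • (WithLp.equiv p (∀ _ : Fin d, ℝ)).symm (Pi.single i (1:ℝ))‖ := by
        conv_lhs => rw [hx]
        simp only [WithLp.equiv_symm_apply, WithLp.toLp_sum, WithLp.toLp_smul]
    _ ≤ ∑ i, ‖(x i) • (WithLp.equiv p (∀ _ : Fin d, ℝ)).symm (Pi.single i (1:ℝ))‖ :=
        norm_sum_le _ _
    _ = ∑ i, |x i| := by
        simp [norm_smul, Real.norm_eq_abs, PiLp.norm_toLp_single]

section dirD
variable {d : ℕ}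

/-- lower directional derivative (inf of difference quotients) -/
noncomputable def dirD (f : (Fin d → ℝ) → ℝ) (x v : Fin d → ℝ) : ℝ :=
  sInf ((fun t : ℝ => (f (x + t • v) - f x) / t) '' Set.Ioi 0)

/-- convexity hypothesis -/
def Cvx (f : (Fin d → ℝ) → ℝ) : Prop :=
  ∀ x y : Fin d → ℝ, ∀ θ : ℝ, 0 ≤ θ → θ ≤ 1 →
    f ((1-θ) • x + θ • y) ≤ (1-θ) * f x + θ * f y

/-- ℓ¹-Lipschitz hypothesis -/
def Lip (f : (Fin d → ℝ) → ℝ) : Prop :=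
  ∀ x y : Fin d → ℝ, f x ≤ f y + ∑ i, |x i - y i|

variable {f : (Fin d → ℝ) → ℝ} {x : Fin d → ℝ}

lemma eps_le {a b : ℝ} (h : ∀ ε : ℝ, 0 < ε → a ≤ b + ε) : a ≤ b := by
  by_contra hc
  push_neg at hc
  have := h ((a - b)/2) (by linarith)
  linarith

lemma quot_mono (hc : Cvx f) {v : Fin d → ℝ} {s t : ℝ} (hs : 0 < s) (hst : s ≤ t) :
    (f (x + s • v) - f x) / s ≤ (f (x + t • v) - f x) / t := by
  have ht : 0 < t := hs.trans_le hst
  have hθ0 : 0 ≤ s / t := by positivity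
  have hθ1 : s / t ≤ 1 := (div_le_one ht).mpr hst
  have h := hc x (x + t • v) (s/t) hθ0 hθ1
  have hx : (1 - s/t) • x + (s/t) • (x + t • v) = x + s • v := by
    have h1 : (s/t) * t = s := div_mul_cancel₀ _ ht.ne'
    rw [smul_add, smul_smul, sub_smul, one_smul, h1]
    abel
  rw [hx] at h
  have h2 : f (x + s • v) - f x ≤ (s/t) * (f (x + t • v) - f x) := by
    have : (1 - s/t) * f x + (s/t) * f (x + t • v) - f x
        = (s/t) * (f (x + t • v) - f x) := by ring
    linarith [h, this]
  rw [div_le_div_iff₀ hs ht]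
  have h4 := mul_le_mul_of_nonneg_right h2 ht.le
  have h5 : (s/t) * (f (x + t • v) - f x) * t = (f (x + t • v) - f x) * s := by
    field_simp
  linarith


lemma quot_bdd (hL : Lip f) {v : Fin d → ℝ} {t : ℝ} (ht : 0 < t) :
    -(∑ i, |v i|) ≤ (f (x + t • v) - f x) / t := by
  have h := hL x (x + t • v)
  have hsum : ∑ i, |x i - (x + t • v) i| = t * ∑ i, |v i| := by
    rw [Finset.mul_sum]
    refine Finset.sum_congr rfl fun i _ => ?_
    simp only [Pi.add_apply, Pi.smul_apply, smul_eq_mul]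
    rw [show x i - (x i + t * v i) = -(t * v i) by ring, abs_neg, abs_mul, abs_of_pos ht]
  rw [hsum] at h
  rw [le_div_iff₀ ht]
  linarith

lemma dirD_nonempty (v : Fin d → ℝ) :
    ((fun t : ℝ => (f (x + t • v) - f x) / t) '' Set.Ioi 0).Nonempty :=
  ⟨_, ⟨1, by norm_num, rfl⟩⟩

lemma dirD_bddBelow (hL : Lip f) (v : Fin d → ℝ) :
    BddBelow ((fun t : ℝ => (f (x + t • v) - f x) / t) '' Set.Ioi 0) := by
  refine ⟨-(∑ i, |v i|), ?_⟩
  rintro b ⟨t, ht, rfl⟩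
  exact quot_bdd hL ht

lemma dirD_le_quot (hL : Lip f) {v : Fin d → ℝ} {t : ℝ} (ht : 0 < t) :
    dirD f x v ≤ (f (x + t • v) - f x) / t :=
  csInf_le (dirD_bddBelow hL v) ⟨t, ht, rfl⟩

lemma neg_sum_le_dirD (hL : Lip f) (v : Fin d → ℝ) :
    -(∑ i, |v i|) ≤ dirD f x v :=
  le_csInf (dirD_nonempty v) (by rintro b ⟨t, ht, rfl⟩; exact quot_bdd hL ht)

lemma dirD_le_sub (hL : Lip f) (v : Fin d → ℝ) :
    dirD f x v ≤ f (x + v) - f x := by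
  have := dirD_le_quot (x := x) hL (v := v) one_pos
  simpa using this

lemma exists_quot_lt (hL : Lip f) (v : Fin d → ℝ) {ε : ℝ} (hε : 0 < ε) :
    ∃ t : ℝ, 0 < t ∧ (f (x + t • v) - f x) / t < dirD f x v + ε := by
  obtain ⟨b, ⟨t, ht, rfl⟩, hlt⟩ :=
    exists_lt_of_csInf_lt (dirD_nonempty (f := f) (x := x) v) (lt_add_of_pos_right _ hε)
  exact ⟨t, ht, hlt⟩

lemma dirD_zero (hL : Lip f) : dirD f x 0 = 0 := by
  apply le_antisymm
  · have := dirD_le_sub (x := x) hL 0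
    simpa using this
  · apply le_csInf (dirD_nonempty 0)
    rintro b ⟨t, ht, rfl⟩
    simp

lemma smul_dirD_le (hL : Lip f) {c : ℝ} (hc : 0 < c) (v : Fin d → ℝ) :
    c * dirD f x v ≤ dirD f x (c • v) := by
  apply le_csInf (dirD_nonempty _)
  rintro b ⟨t, ht, rfl⟩
  have ht' : (0:ℝ) < t := ht
  dsimp only
  rw [show x + t • c • v = x + (t*c) • v by rw [smul_smul]]
  have h2 : dirD f x v ≤ (f (x + (t*c) • v) - f x) / (t*c) :=
    dirD_le_quot hL (mul_pos ht hc)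
  calc c * dirD f x v ≤ c * ((f (x + (t*c) • v) - f x) / (t*c)) :=
        mul_le_mul_of_nonneg_left h2 hc.le
    _ = (f (x + (t*c) • v) - f x) / t := by
        rw [mul_div_assoc', mul_comm t c]
        exact mul_div_mul_left _ _ hc.ne'

lemma dirD_smul (hL : Lip f) {c : ℝ} (hc : 0 < c) (v : Fin d → ℝ) :
    dirD f x (c • v) = c * dirD f x v := by
  apply le_antisymm
  · have h := smul_dirD_le (x := x) hL (inv_pos.mpr hc) (c • v)
    rw [smul_smul, inv_mul_cancel₀ hc.ne', one_smul] at h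
    calc dirD f x (c • v) = c * (c⁻¹ * dirD f x (c • v)) := by
          field_simp
      _ ≤ c * dirD f x v := mul_le_mul_of_nonneg_left h hc.le
  · exact smul_dirD_le hL hc v

lemma dirD_add (hc : Cvx f) (hL : Lip f) (v w : Fin d → ℝ) :
    dirD f x (v + w) ≤ dirD f x v + dirD f x w := by
  apply eps_le
  intro ε hε
  obtain ⟨t1, ht1, h1⟩ := exists_quot_lt (x := x) hL v (half_pos hε)
  obtain ⟨t2, ht2, h2⟩ := exists_quot_lt (x := x) hL w (half_pos hε)
  set t := min t1 t2 with hts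
  have ht : 0 < t := lt_min ht1 ht2
  have q1 : (f (x + t • v) - f x) / t ≤ dirD f x v + ε/2 :=
    le_of_lt (lt_of_le_of_lt (quot_mono hc ht (min_le_left _ _)) h1)
  have q2 : (f (x + t • w) - f x) / t ≤ dirD f x w + ε/2 :=
    le_of_lt (lt_of_le_of_lt (quot_mono hc ht (min_le_right _ _)) h2)
  have hmid : (1 - (1:ℝ)/2) • (x + t • v) + ((1:ℝ)/2) • (x + t • w)
      = x + (t/2) • (v + w) := by
    module
  have hcv := hc (x + t • v) (x + t • w) (1/2) (by norm_num) (by norm_num)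
  rw [hmid] at hcv
  have step : dirD f x (v + w) ≤ (f (x + (t/2) • (v + w)) - f x) / (t/2) :=
    dirD_le_quot hL (by positivity)
  have hnum : f (x + (t/2) • (v + w)) - f x
      ≤ (1/2) * ((f (x + t • v) - f x) + (f (x + t • w) - f x)) := by
    have : (1 - (1:ℝ)/2) * f (x + t • v) + (1/2) * f (x + t • w)
        = (1/2) * ((f (x + t • v) - f x) + (f (x + t • w) - f x)) + f x := by ring
    linarith [hcv, this]
  have hdiv : (f (x + (t/2) • (v + w)) - f x) / (t/2)
      ≤ (f (x + t • v) - f x) / t + (f (x + t • w) - f x) / t := by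
    rw [div_le_iff₀ (by positivity : (0:ℝ) < t/2)]
    have e1 : ((f (x + t • v) - f x) / t + (f (x + t • w) - f x) / t) * (t/2)
        = (1/2) * ((f (x + t • v) - f x) + (f (x + t • w) - f x)) := by
      field_simp
    rw [e1]
    exact hnum
  linarith

lemma mem_subdiff_of_le_dirD (hL : Lip f) {u : Fin d → ℝ}
    (h : ∀ v, ∑ i, u i * v i ≤ dirD f x v) : u ∈ subdiff f x := by
  intro y
  have h1 := (h (y - x)).trans (dirD_le_sub hL (y - x))
  have h2 : x + (y - x) = y := by abel
  rw [h2] at h1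
  have h3 : ∑ i, u i * (y - x) i = ∑ i, u i * (y i - x i) :=
    Finset.sum_congr rfl fun i _ => rfl
  linarith [h1, h3.symm.le]

end dirD

section key
variable {d : ℕ}

lemma ip_add (α v w : Fin d → ℝ) :
    ∑ i, α i * (v + w) i = (∑ i, α i * v i) + ∑ i, α i * w i := by
  rw [← Finset.sum_add_distrib]
  exact Finset.sum_congr rfl fun i _ => by simp [mul_add]

lemma ip_smul (α : Fin d → ℝ) (c : ℝ) (v : Fin d → ℝ) :
    ∑ i, α i * (c • v) i = c * ∑ i, α i * v i := by
  rw [Finset.mul_sum]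
  exact Finset.sum_congr rfl fun i _ => by simp; ring

lemma ip_zero (α : Fin d → ℝ) : ∑ i, α i * (0 : Fin d → ℝ) i = 0 := by simp

lemma key_kkt (g1 g2 : (Fin d → ℝ) → ℝ)
    (hc1 : Cvx g1) (hc2 : Cvx g2) (hL1 : Lip g1) (hL2 : Lip g2)
    (ω1 ω2 : ℝ) (hω1 : 0 < ω1) (hω2 : 0 < ω2)
    (α : Fin d → ℝ) (hα : α ≠ 0) (β : ℝ)
    (xs : Fin d → ℝ) (hxs : ∑ i, α i * xs i = β)
    (hmin : ∀ x, ∑ i, α i * x i = β →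
        ω1 * g1 xs + ω2 * g2 xs ≤ ω1 * g1 x + ω2 * g2 x) :
    ∃ lam : ℝ, lam • α ∈ ω1 • subdiff g1 xs + ω2 • subdiff g2 xs := by
  classical
  set D1 : (Fin d → ℝ) → ℝ := dirD g1 xs with hD1
  set D2 : (Fin d → ℝ) → ℝ := dirD g2 xs with hD2
  set DF : (Fin d → ℝ) → ℝ := fun v => ω1 * D1 v + ω2 * D2 v with hDF
  -- tangent directions have nonnegative derivative
  have step0 : ∀ v : Fin d → ℝ, (∑ i, α i * v i) = 0 → 0 ≤ DF v := by
    intro v hv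
    have := eps_le (a := -DF v) (b := 0) ?_
    · linarith
    intro ε hε
    obtain ⟨t1, ht1, h1⟩ := exists_quot_lt (x := xs) hL1 v
      (div_pos hε (by linarith : (0:ℝ) < 2 * ω1))
    obtain ⟨t2, ht2, h2⟩ := exists_quot_lt (x := xs) hL2 v
      (div_pos hε (by linarith : (0:ℝ) < 2 * ω2))
    set t := min t1 t2 with hts
    have ht : 0 < t := lt_min ht1 ht2
    have q1 : (g1 (xs + t • v) - g1 xs) / t ≤ D1 v + ε/(2*ω1) :=
      le_of_lt (lt_of_le_of_lt (quot_mono hc1 ht (min_le_left _ _)) h1)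
    have q2 : (g2 (xs + t • v) - g2 xs) / t ≤ D2 v + ε/(2*ω2) :=
      le_of_lt (lt_of_le_of_lt (quot_mono hc2 ht (min_le_right _ _)) h2)
    have hline : ∑ i, α i * (xs + t • v) i = β := by
      rw [ip_add, ip_smul, hv, hxs]; ring
    have hm := hmin (xs + t • v) hline
    have hnn : 0 ≤ ω1 * ((g1 (xs + t • v) - g1 xs) / t)
        + ω2 * ((g2 (xs + t • v) - g2 xs) / t) := by
      have h0 : 0 ≤ (ω1 * (g1 (xs + t • v) - g1 xs)
          + ω2 * (g2 (xs + t • v) - g2 xs)) / t := by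
        apply div_nonneg _ ht.le
        linarith
      rw [add_div, mul_div_assoc, mul_div_assoc] at h0
      exact h0
    have e1 : ω1 * (ε/(2*ω1)) = ε/2 := by field_simp
    have e2 : ω2 * (ε/(2*ω2)) = ε/2 := by field_simp
    have b1 : ω1 * ((g1 (xs + t • v) - g1 xs) / t) ≤ ω1 * D1 v + ε/2 := by
      have := mul_le_mul_of_nonneg_left q1 hω1.le
      rw [mul_add, e1] at this
      exact this
    have b2 : ω2 * ((g2 (xs + t • v) - g2 xs) / t) ≤ ω2 * D2 v + ε/2 := by
      have := mul_le_mul_of_nonneg_left q2 hω2.le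
      rw [mul_add, e2] at this
      exact this
    have : 0 ≤ DF v + ε := by
      simp only [hDF]
      linarith
    linarith
  -- basic facts about DF
  have DF_add : ∀ v w, DF (v + w) ≤ DF v + DF w := by
    intro v w
    have a1 := mul_le_mul_of_nonneg_left (dirD_add (x := xs) hc1 hL1 v w) hω1.le
    have a2 := mul_le_mul_of_nonneg_left (dirD_add (x := xs) hc2 hL2 v w) hω2.le
    simp only [hDF, hD1, hD2]
    linarith
  have DF_smul : ∀ c : ℝ, 0 < c → ∀ v, DF (c • v) = c * DF v := by
    intro c hc v
    simp only [hDF, hD1, hD2, dirD_smul hL1 hc, dirD_smul hL2 hc]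
    ring
  -- the multiplier lam
  have hαα : 0 < ∑ i, α i * α i := by
    obtain ⟨j, hj⟩ := Function.ne_iff.mp hα
    apply Finset.sum_pos' (fun i _ => mul_self_nonneg _)
    exact ⟨j, Finset.mem_univ j, mul_self_pos.mpr hj⟩
  set w0 : Fin d → ℝ := (∑ i, α i * α i)⁻¹ • α with hw0
  have hw0ip : ∑ i, α i * w0 i = 1 := by
    rw [hw0, ip_smul, inv_mul_cancel₀ hαα.ne']
  set S : Set ℝ := DF '' {w | ∑ i, α i * w i = 1} with hS
  have hSne : S.Nonempty := ⟨DF w0, w0, hw0ip, rfl⟩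
  have tangent_bound : ∀ v' : Fin d → ℝ, ∑ i, α i * v' i = -1 →
      ∀ b ∈ S, -DF v' ≤ b := by
    intro v' hv' b hb
    obtain ⟨w, hw, rfl⟩ := hb
    have htan : ∑ i, α i * (w + v') i = 0 := by rw [ip_add, hw, hv']; ring
    have := step0 (w + v') htan
    have := DF_add w v'
    linarith
  have hSbdd : BddBelow S := ⟨-DF (-w0), by
    intro b hb
    apply tangent_bound (-w0) _ b hb
    have : (-w0 : Fin d → ℝ) = (-1 : ℝ) • w0 := by funext i; simp
    rw [this, ip_smul, hw0ip]; ring⟩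
  set lam : ℝ := sInf S with hlam
  -- key inequality
  have keyineq : ∀ v : Fin d → ℝ, lam * (∑ i, α i * v i) ≤ DF v := by
    intro v
    rcases lt_trichotomy (∑ i, α i * v i) 0 with h | h | h
    · set s : ℝ := -(∑ i, α i * v i) with hsdef
      have hs : 0 < s := by simp [hsdef]; linarith
      set v' : Fin d → ℝ := s⁻¹ • v with hv'
      have hipv' : ∑ i, α i * v' i = -1 := by
        rw [hv', ip_smul]
        field_simp [hsdef]
        linarith
      have h1 : -DF v' ≤ lam := le_csInf hSne (tangent_bound v' hipv')
      have h2 : DF v' = s⁻¹ * DF v := by rw [hv', DF_smul _ (inv_pos.mpr hs)]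
      rw [h2] at h1
      have h3 := mul_le_mul_of_nonneg_left h1 hs.le
      -- s * (-(s⁻¹ * DF v)) ≤ s * lam
      have e : s * -(s⁻¹ * DF v) = -DF v := by
        rw [mul_neg, ← mul_assoc, mul_inv_cancel₀ hs.ne', one_mul]
      rw [e] at h3
      have : lam * (∑ i, α i * v i) = -(s * lam) := by rw [hsdef]; ring
      linarith
    · rw [h, mul_zero]; exact step0 v h
    · set s : ℝ := ∑ i, α i * v i with hsdef
      set w : Fin d → ℝ := s⁻¹ • v with hw
      have hipw : ∑ i, α i * w i = 1 := by
        rw [hw, ip_smul]; field_simp; linarith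
      have h1 : lam ≤ DF w := csInf_le hSbdd ⟨w, hipw, rfl⟩
      have h2 : DF w = s⁻¹ * DF v := by rw [hw, DF_smul _ (inv_pos.mpr h)]
      rw [h2] at h1
      have h3 := mul_le_mul_of_nonneg_left h1 h.le
      have e : s * (s⁻¹ * DF v) = DF v := by
        rw [← mul_assoc, mul_inv_cancel₀ h.ne', one_mul]
      rw [e] at h3
      calc lam * s = s * lam := by ring
        _ ≤ DF v := h3
  -- the sublinear majorant P
  set term : (Fin d → ℝ) → (Fin d → ℝ) → ℝ :=
    fun v w => ω1 * D1 (v + w) + ω2 * D2 w - lam * (∑ i, α i * w i) with hterm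
  set P : (Fin d → ℝ) → ℝ := fun v => sInf (Set.range (term v)) with hP
  have term_lb : ∀ v w, lam * (∑ i, α i * v i) - ω2 * D2 v ≤ term v w := by
    intro v w
    have k := keyineq (v + w)
    have hsub := mul_le_mul_of_nonneg_left (dirD_add (x := xs) hc2 hL2 v w) hω2.le
    rw [ip_add] at k
    simp only [hterm, hDF] at k ⊢
    simp only [hD1, hD2] at k ⊢
    linarith
  have Pne : ∀ v, (Set.range (term v)).Nonempty := fun v => ⟨term v 0, 0, rfl⟩
  have Pbdd : ∀ v, BddBelow (Set.range (term v)) := fun v =>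
    ⟨lam * (∑ i, α i * v i) - ω2 * D2 v, by rintro x ⟨w, rfl⟩; exact term_lb v w⟩
  have P_le_term : ∀ v w, P v ≤ term v w := fun v w => csInf_le (Pbdd v) ⟨w, rfl⟩
  have lb_le_P : ∀ v, lam * (∑ i, α i * v i) - ω2 * D2 v ≤ P v := fun v =>
    le_csInf (Pne v) (by rintro x ⟨w, rfl⟩; exact term_lb v w)
  have P_le_D1 : ∀ v, P v ≤ ω1 * D1 v := by
    intro v
    have := P_le_term v 0
    simp only [hterm] at this
    rw [add_zero, ip_zero, hD2, dirD_zero hL2] at this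
    simpa using this
  have P_le_neg : ∀ v, P (-v) ≤ ω2 * D2 v - lam * (∑ i, α i * v i) := by
    intro v
    have := P_le_term (-v) v
    simp only [hterm] at this
    rw [neg_add_cancel, hD1, dirD_zero hL1] at this
    simpa using this
  have N_add : ∀ v1 v2, P (v1 + v2) ≤ P v1 + P v2 := by
    intro v1 v2
    apply eps_le
    intro ε hε
    obtain ⟨b1, ⟨w1, rfl⟩, hb1⟩ := exists_lt_of_csInf_lt (Pne v1)
      (lt_add_of_pos_right (P v1) (half_pos hε))
    obtain ⟨b2, ⟨w2, rfl⟩, hb2⟩ := exists_lt_of_csInf_lt (Pne v2)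
      (lt_add_of_pos_right (P v2) (half_pos hε))
    have hre : v1 + v2 + (w1 + w2) = (v1 + w1) + (v2 + w2) := by abel
    have hd1 : D1 (v1 + v2 + (w1 + w2)) ≤ D1 (v1 + w1) + D1 (v2 + w2) := by
      rw [hre, hD1]; exact dirD_add hc1 hL1 _ _
    have hd2 : D2 (w1 + w2) ≤ D2 w1 + D2 w2 := by
      rw [hD2]; exact dirD_add hc2 hL2 _ _
    have ht : term (v1 + v2) (w1 + w2) ≤ term v1 w1 + term v2 w2 := by
      simp only [hterm]
      rw [ip_add]
      have m1 := mul_le_mul_of_nonneg_left hd1 hω1.le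
      have m2 := mul_le_mul_of_nonneg_left hd2 hω2.le
      linarith
    have hfin := (P_le_term (v1 + v2) (w1 + w2)).trans ht
    calc P (v1 + v2) ≤ term v1 w1 + term v2 w2 := hfin
      _ ≤ (P v1 + ε/2) + (P v2 + ε/2) := add_le_add hb1.le hb2.le
      _ = P v1 + P v2 + ε := by ring
  have smul_P_le : ∀ c : ℝ, 0 < c → ∀ v, c * P v ≤ P (c • v) := by
    intro c hc v
    apply le_csInf (Pne _)
    rintro x ⟨w, rfl⟩
    have key_e : ∀ w' : Fin d → ℝ, term (c • v) (c • w') = c * term v w' := by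
      intro w'
      simp only [hterm, hD1, hD2]
      rw [show c • v + c • w' = c • (v + w') from (smul_add c v w').symm,
        dirD_smul hL1 hc, dirD_smul hL2 hc, ip_smul]
      ring
    rw [show w = c • (c⁻¹ • w) from (smul_inv_smul₀ hc.ne' w).symm, key_e]
    exact mul_le_mul_of_nonneg_left (P_le_term v (c⁻¹ • w)) hc.le
  have N_hom : ∀ c : ℝ, 0 < c → ∀ v, P (c • v) = c * P v := by
    intro c hc v
    apply le_antisymm
    · have h := smul_P_le c⁻¹ (inv_pos.mpr hc) (c • v)
      rw [smul_smul, inv_mul_cancel₀ hc.ne', one_smul] at h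
      calc P (c • v) = c * (c⁻¹ * P (c • v)) := by
            rw [← mul_assoc, mul_inv_cancel₀ hc.ne', one_mul]
        _ ≤ c * P v := mul_le_mul_of_nonneg_left h hc.le
    · exact smul_P_le c hc v
  -- Hahn-Banach
  have hP0 : 0 ≤ P 0 := by
    have := lb_le_P 0
    rw [ip_zero, hD2, dirD_zero hL2] at this
    simpa using this
  obtain ⟨g, -, hg⟩ := exists_extension_of_le_sublinear
    (⟨⊥, 0⟩ : (Fin d → ℝ) →ₗ.[ℝ] ℝ) P N_hom N_add
    (by
      rintro ⟨z, hz⟩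
      rcases Submodule.mem_bot ℝ |>.mp hz with rfl
      simpa using hP0)
  set u1 : Fin d → ℝ := fun i => g (Pi.single i 1) with hu1
  have hg_eval : ∀ v : Fin d → ℝ, ∑ i, u1 i * v i = g v := by
    intro v
    have hv : v = ∑ i, (v i) • (Pi.single i 1 : Fin d → ℝ) := by
      funext j
      simp [Pi.single_apply, Finset.sum_apply]
    conv_rhs => rw [hv]
    rw [map_sum]
    exact Finset.sum_congr rfl fun i _ => by rw [map_smul]; simp [hu1, mul_comm]
  have hu1_le : ∀ v, ∑ i, u1 i * v i ≤ ω1 * D1 v := by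
    intro v
    rw [hg_eval]
    exact (hg v).trans (P_le_D1 v)
  have hu1_ge : ∀ v, lam * (∑ i, α i * v i) - ω2 * D2 v ≤ ∑ i, u1 i * v i := by
    intro v
    rw [hg_eval]
    have h1 : g (-v) ≤ P (-v) := hg (-v)
    have h2 := P_le_neg v
    have h3 : g (-v) = -g v := by rw [map_neg]
    linarith
  -- construct the decomposition
  refine ⟨lam, ?_⟩
  set s1 : Fin d → ℝ := ω1⁻¹ • u1 with hs1def
  set s2 : Fin d → ℝ := ω2⁻¹ • (lam • α - u1) with hs2def
  have hs1 : s1 ∈ subdiff g1 xs := by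
    apply mem_subdiff_of_le_dirD hL1
    intro v
    have e : ∑ i, s1 i * v i = ω1⁻¹ * ∑ i, u1 i * v i := by
      rw [Finset.mul_sum]
      exact Finset.sum_congr rfl fun i _ => by simp [hs1def]; ring
    rw [e]
    have := mul_le_mul_of_nonneg_left (hu1_le v) (inv_pos.mpr hω1).le
    rw [← mul_assoc, inv_mul_cancel₀ hω1.ne', one_mul] at this
    rw [← hD1]
    exact this
  have hs2 : s2 ∈ subdiff g2 xs := by
    apply mem_subdiff_of_le_dirD hL2
    intro v
    have e : ∑ i, s2 i * v i
        = ω2⁻¹ * (lam * (∑ i, α i * v i) - ∑ i, u1 i * v i) := by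
      rw [mul_sub, Finset.mul_sum, Finset.mul_sum, Finset.mul_sum, ← Finset.sum_sub_distrib]
      refine Finset.sum_congr rfl fun i _ => by simp [hs2def]; ring
    rw [e]
    have h4 : lam * (∑ i, α i * v i) - ∑ i, u1 i * v i ≤ ω2 * D2 v := by
      have := hu1_ge v
      linarith
    have := mul_le_mul_of_nonneg_left h4 (inv_pos.mpr hω2).le
    rw [← mul_assoc, inv_mul_cancel₀ hω2.ne', one_mul] at this
    rw [← hD2]
    exact this
  have hdecomp : lam • α = ω1 • s1 + ω2 • s2 := by
    rw [hs1def, hs2def, smul_smul, smul_smul,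
      mul_inv_cancel₀ hω1.ne', mul_inv_cancel₀ hω2.ne', one_smul, one_smul]
    abel
  rw [hdecomp]
  exact Set.add_mem_add (Set.smul_mem_smul_set hs1) (Set.smul_mem_smul_set hs2)

end key

section apply
variable {d : ℕ}

lemma cvx_sub (p : ℝ≥0∞) (hp : 1 ≤ p) (c : Fin d → ℝ) :
    Cvx (fun z => lpNorm p (z - c)) := by
  intro x y θ h0 h1
  have h2 : ((1-θ) • x + θ • y) - c = (1-θ) • (x - c) + θ • (y - c) := by
    module
  simp only [h2]
  calc lpNorm p ((1-θ) • (x - c) + θ • (y - c))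
      ≤ lpNorm p ((1-θ) • (x - c)) + lpNorm p (θ • (y - c)) := lpNorm_add_le p hp _ _
    _ = (1-θ) * lpNorm p (x - c) + θ * lpNorm p (y - c) := by
        rw [lpNorm_smul p hp, lpNorm_smul p hp, abs_of_nonneg (by linarith), abs_of_nonneg h0]

lemma cvx_sub' (p : ℝ≥0∞) (hp : 1 ≤ p) (c : Fin d → ℝ) :
    Cvx (fun z => lpNorm p (c - z)) := by
  intro x y θ h0 h1
  have h2 : c - ((1-θ) • x + θ • y) = (1-θ) • (c - x) + θ • (c - y) := by
    module
  simp only [h2]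
  calc lpNorm p ((1-θ) • (c - x) + θ • (c - y))
      ≤ lpNorm p ((1-θ) • (c - x)) + lpNorm p (θ • (c - y)) := lpNorm_add_le p hp _ _
    _ = (1-θ) * lpNorm p (c - x) + θ * lpNorm p (c - y) := by
        rw [lpNorm_smul p hp, lpNorm_smul p hp, abs_of_nonneg (by linarith), abs_of_nonneg h0]

lemma lip_sub (p : ℝ≥0∞) (hp : 1 ≤ p) (c : Fin d → ℝ) :
    Lip (fun z => lpNorm p (z - c)) := by
  intro x y
  have h2 : x - c = (y - c) + (x - y) := by abel
  simp only [h2]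
  have h3 := (lpNorm_add_le p hp (y - c) (x - y))
  have h4 : lpNorm p (x - y) ≤ ∑ i, |x i - y i| := by
    have := lpNorm_le_sum p hp (x - y)
    simpa using this
  linarith

lemma lip_sub' (p : ℝ≥0∞) (hp : 1 ≤ p) (c : Fin d → ℝ) :
    Lip (fun z => lpNorm p (c - z)) := by
  intro x y
  have h2 : c - x = (c - y) + (y - x) := by abel
  simp only [h2]
  have h3 := (lpNorm_add_le p hp (c - y) (y - x))
  have h4 : lpNorm p (y - x) ≤ ∑ i, |x i - y i| := by
    have h5 := lpNorm_le_sum p hp (y - x)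
    have h6 : ∑ i, |(y - x) i| = ∑ i, |x i - y i| := by
      refine Finset.sum_congr rfl fun i _ => ?_
      rw [Pi.sub_apply, abs_sub_comm]
    rw [h6] at h5
    exact h5
  linarith

end apply

/-- Lemma 9: optimality conditions for the two gate points `x*, y*` of the
shortest weighted path between `a` and `b` when travel along the hyperplane
(with norm `ℓ_{p_H}`) is allowed. -/
theorem stmt_9 {d : ℕ} (pA pB pH : ℝ≥0∞) (hpA : 1 ≤ pA) (hpB : 1 ≤ pB) (hpH : 1 ≤ pH)
    (α : Fin d → ℝ) (hα : α ≠ 0) (β : ℝ)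
    (a b : Fin d → ℝ) (ha : ∑ i, α i * a i < β) (hb : β < ∑ i, α i * b i)
    (ωa ωb ωH : ℝ) (hωa : 0 < ωa) (hωb : 0 < ωb) (hωH : 0 < ωH)
    (xs ys : Fin d → ℝ) (hxs : ∑ i, α i * xs i = β) (hys : ∑ i, α i * ys i = β)
    (hmin : ∀ x y : Fin d → ℝ, ∑ i, α i * x i = β → ∑ i, α i * y i = β →
        ωa * lpNorm pA (xs - a) + ωH * lpNorm pH (xs - ys) + ωb * lpNorm pB (ys - b) ≤
          ωa * lpNorm pA (x - a) + ωH * lpNorm pH (x - y) + ωb * lpNorm pB (y - b)) :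
    (∃ lama : ℝ, lama • α ∈
        ωa • subdiff (fun z => lpNorm pA (z - a)) xs +
          ωH • subdiff (fun z => lpNorm pH (z - ys)) xs) ∧
    (∃ lamb : ℝ, lamb • α ∈
        ωb • subdiff (fun z => lpNorm pB (z - b)) ys +
          ωH • subdiff (fun z => lpNorm pH (xs - z)) ys) := by
  constructor
  · apply key_kkt (fun z => lpNorm pA (z - a)) (fun z => lpNorm pH (z - ys))
      (cvx_sub pA hpA a) (cvx_sub pH hpH ys) (lip_sub pA hpA a) (lip_sub pH hpH ys)
      ωa ωH hωa hωH α hα β xs hxs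
    intro x hx
    have := hmin x ys hx hys
    linarith
  · apply key_kkt (fun z => lpNorm pB (z - b)) (fun z => lpNorm pH (xs - z))
      (cvx_sub pB hpB b) (cvx_sub' pH hpH xs) (lip_sub pB hpB b) (lip_sub' pH hpH xs)
      ωb ωH hωb hωH α hα β ys hys
    intro y hy
    have := hmin xs y hxs hy
    linarith
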